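/- Let E be a real inner product space, let A : E → Set E be a monotone operator, let λ > 0, let N ≥ 1 be an integer, and let w* ∈ E satisfy 0 ∈ A(w*). Suppose w^0, w^1, …, w^{N+1} ∈ E are proximal point iterates, i.e., for every k = 0, …, N there exists v ∈ A(w^{k+1}) with w^k − w^{k+1} = λ • v. Then ‖w^N − w^{N+1}‖² ≤ (N^N / (N+1)^{N+1}) · ‖w^0 − w*‖². (Equivalently, the ratio ‖w^N − w^{N+1}‖²/‖w^0 − w*‖² is at most 1/((1 + 1/N)^N (N+1)).) -/

import Mathlib

set_option maxRecDepth 8000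


open scoped RealInnerProductSpace

/-- The Lyapunov/potential function for the tight PPA rate analysis.
With `ν = M+1`, `phi w wstar M j = (ν+1)^j ν^(M-j) ((ν-j)ν⟪x,x⟫ + 2(j+1)ν⟪x,r⟫ + (j+1)ν²⟪r,r⟫)`
where `x = w (j+1) - wstar` and `r = w j - w (j+1)`. -/
private noncomputable def phi {E : Type*} [NormedAddCommGroup E] [InnerProductSpace ℝ E]
    (w : ℕ → E) (wstar : E) (M : ℕ) (j : ℕ) : ℝ :=
  ((M : ℝ) + 2) ^ j * ((M : ℝ) + 1) ^ (M - j) *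
    ( (((M : ℝ) + 1) - (j : ℝ)) * ((M : ℝ) + 1) *
        ⟪w (j + 1) - wstar, w (j + 1) - wstar⟫
      + 2 * ((j : ℝ) + 1) * ((M : ℝ) + 1) *
        ⟪w (j + 1) - wstar, w j - w (j + 1)⟫
      + ((j : ℝ) + 1) * ((M : ℝ) + 1) ^ 2 *
        ⟪w j - w (j + 1), w j - w (j + 1)⟫ )

private lemma phi_step {E : Type*} [NormedAddCommGroup E] [InnerProductSpace ℝ E]
    (w : ℕ → E) (wstar : E) (M j : ℕ) (hj : j < M)
    (h1 : 0 ≤ ⟪(w j - w (j + 1)) - (w (j + 1) - w (j + 2)), w (j + 1) - w (j + 2)⟫)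
    (h2 : 0 ≤ ⟪w (j + 2) - wstar, w (j + 1) - w (j + 2)⟫) :
    phi w wstar M (j + 1) ≤ phi w wstar M j := by
  have key : phi w wstar M j - phi w wstar M (j + 1)
      = ((M : ℝ) + 2) ^ j * ((M : ℝ) + 1) ^ (M - j) *
        ( 2 * ((j : ℝ) + 1) * ((M : ℝ) + 2) * ((M : ℝ) + 1) *
            ⟪(w j - w (j + 1)) - (w (j + 1) - w (j + 2)), w (j + 1) - w (j + 2)⟫
          + 2 * ((M : ℝ) - 1 - (j : ℝ)) * ((M : ℝ) + 2) *
            ⟪w (j + 2) - wstar, w (j + 1) - w (j + 2)⟫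
          + ((j : ℝ) + 1) *
            ⟪(w (j + 2) - wstar) + ((M : ℝ) + 1) •
                ((w j - w (j + 1)) - (w (j + 1) - w (j + 2))),
             (w (j + 2) - wstar) + ((M : ℝ) + 1) •
                ((w j - w (j + 1)) - (w (j + 1) - w (j + 2)))⟫ ) := by
    have hL : M - j = M - (j + 1) + 1 := by omega
    simp only [phi, show j + 1 + 1 = j + 2 from rfl]
    rw [hL, pow_succ, pow_succ]
    push_cast
    simp only [inner_add_left, inner_add_right, inner_sub_left, inner_sub_right,
      real_inner_smul_left, real_inner_smul_right, real_inner_comm]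
    ring
  have c1 : (0 : ℝ) ≤ 2 * ((j : ℝ) + 1) * ((M : ℝ) + 2) * ((M : ℝ) + 1) *
      ⟪(w j - w (j + 1)) - (w (j + 1) - w (j + 2)), w (j + 1) - w (j + 2)⟫ := by
    apply mul_nonneg _ h1
    positivity
  have c2 : (0 : ℝ) ≤ 2 * ((M : ℝ) - 1 - (j : ℝ)) * ((M : ℝ) + 2) *
      ⟪w (j + 2) - wstar, w (j + 1) - w (j + 2)⟫ := by
    apply mul_nonneg _ h2
    have : (j : ℝ) + 1 ≤ (M : ℝ) := by exact_mod_cast hj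
    have h2' : (0 : ℝ) ≤ (M : ℝ) - 1 - (j : ℝ) := by linarith
    have h3' : (0 : ℝ) ≤ (M : ℝ) + 2 := by positivity
    nlinarith
  have c3 : (0 : ℝ) ≤ ((j : ℝ) + 1) *
      ⟪(w (j + 2) - wstar) + ((M : ℝ) + 1) •
          ((w j - w (j + 1)) - (w (j + 1) - w (j + 2))),
       (w (j + 2) - wstar) + ((M : ℝ) + 1) •
          ((w j - w (j + 1)) - (w (j + 1) - w (j + 2)))⟫ := by
    apply mul_nonneg (by positivity) real_inner_self_nonneg
  nlinarith [mul_nonneg (mul_nonneg (pow_nonneg (by positivity : (0:ℝ) ≤ (M:ℝ)+2) j)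
    (pow_nonneg (by positivity : (0:ℝ) ≤ (M:ℝ)+1) (M - j)))
    (by linarith : (0:ℝ) ≤ 2 * ((j : ℝ) + 1) * ((M : ℝ) + 2) * ((M : ℝ) + 1) *
            ⟪(w j - w (j + 1)) - (w (j + 1) - w (j + 2)), w (j + 1) - w (j + 2)⟫
          + 2 * ((M : ℝ) - 1 - (j : ℝ)) * ((M : ℝ) + 2) *
            ⟪w (j + 2) - wstar, w (j + 1) - w (j + 2)⟫
          + ((j : ℝ) + 1) *
            ⟪(w (j + 2) - wstar) + ((M : ℝ) + 1) •
                ((w j - w (j + 1)) - (w (j + 1) - w (j + 2))),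
             (w (j + 2) - wstar) + ((M : ℝ) + 1) •
                ((w j - w (j + 1)) - (w (j + 1) - w (j + 2)))⟫), key]

private lemma phi_last {E : Type*} [NormedAddCommGroup E] [InnerProductSpace ℝ E]
    (w : ℕ → E) (wstar : E) (M : ℕ)
    (h1 : 0 ≤ ⟪(w M - w (M + 1)) - (w (M + 1) - w (M + 2)), w (M + 1) - w (M + 2)⟫)
    (h2 : 0 ≤ ⟪w (M + 2) - wstar, w (M + 1) - w (M + 2)⟫) :
    ((M : ℝ) + 1) * ((M : ℝ) + 2) ^ (M + 2) *
      ⟪w (M + 1) - w (M + 2), w (M + 1) - w (M + 2)⟫ ≤ phi w wstar M M := by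
  have key : phi w wstar M M
      - ((M : ℝ) + 1) * ((M : ℝ) + 2) ^ (M + 2) *
        ⟪w (M + 1) - w (M + 2), w (M + 1) - w (M + 2)⟫
      = ((M : ℝ) + 2) ^ M *
        ( 2 * ((M : ℝ) + 1) ^ 2 * ((M : ℝ) + 2) *
            ⟪(w M - w (M + 1)) - (w (M + 1) - w (M + 2)), w (M + 1) - w (M + 2)⟫
          + 2 * ((M : ℝ) + 1) * ((M : ℝ) + 2) *
            ⟪w (M + 2) - wstar, w (M + 1) - w (M + 2)⟫
          + ((M : ℝ) + 1) *
            ⟪(w (M + 2) - wstar) + ((M : ℝ) + 1) •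
                ((w M - w (M + 1)) - (w (M + 1) - w (M + 2))),
             (w (M + 2) - wstar) + ((M : ℝ) + 1) •
                ((w M - w (M + 1)) - (w (M + 1) - w (M + 2)))⟫ ) := by
    have hpw : ((M : ℝ) + 2) ^ (M + 2) = ((M : ℝ) + 2) ^ M * (((M : ℝ) + 2) * ((M : ℝ) + 2)) := by
      rw [show M + 2 = M + 1 + 1 from rfl, pow_succ, pow_succ]; ring
    simp only [phi, Nat.sub_self, pow_zero]
    rw [hpw]
    push_cast
    simp only [inner_add_left, inner_add_right, inner_sub_left, inner_sub_right,
      real_inner_smul_left, real_inner_smul_right, real_inner_comm]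
    ring
  have c1 : (0 : ℝ) ≤ 2 * ((M : ℝ) + 1) ^ 2 * ((M : ℝ) + 2) *
      ⟪(w M - w (M + 1)) - (w (M + 1) - w (M + 2)), w (M + 1) - w (M + 2)⟫ :=
    mul_nonneg (by positivity) h1
  have c2 : (0 : ℝ) ≤ 2 * ((M : ℝ) + 1) * ((M : ℝ) + 2) *
      ⟪w (M + 2) - wstar, w (M + 1) - w (M + 2)⟫ :=
    mul_nonneg (by positivity) h2
  have c3 : (0 : ℝ) ≤ ((M : ℝ) + 1) *
      ⟪(w (M + 2) - wstar) + ((M : ℝ) + 1) •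
          ((w M - w (M + 1)) - (w (M + 1) - w (M + 2))),
       (w (M + 2) - wstar) + ((M : ℝ) + 1) •
          ((w M - w (M + 1)) - (w (M + 1) - w (M + 2)))⟫ :=
    mul_nonneg (by positivity) real_inner_self_nonneg
  nlinarith [mul_nonneg (pow_nonneg (by positivity : (0:ℝ) ≤ (M:ℝ)+2) M)
    (by linarith : (0:ℝ) ≤ 2 * ((M : ℝ) + 1) ^ 2 * ((M : ℝ) + 2) *
            ⟪(w M - w (M + 1)) - (w (M + 1) - w (M + 2)), w (M + 1) - w (M + 2)⟫
          + 2 * ((M : ℝ) + 1) * ((M : ℝ) + 2) *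
            ⟪w (M + 2) - wstar, w (M + 1) - w (M + 2)⟫
          + ((M : ℝ) + 1) *
            ⟪(w (M + 2) - wstar) + ((M : ℝ) + 1) •
                ((w M - w (M + 1)) - (w (M + 1) - w (M + 2))),
             (w (M + 2) - wstar) + ((M : ℝ) + 1) •
                ((w M - w (M + 1)) - (w (M + 1) - w (M + 2)))⟫), key]

private lemma phi_zero {E : Type*} [NormedAddCommGroup E] [InnerProductSpace ℝ E]
    (w : ℕ → E) (wstar : E) (M : ℕ)
    (h : 0 ≤ ⟪w 1 - wstar, w 0 - w 1⟫) :
    phi w wstar M 0 ≤ ((M : ℝ) + 1) ^ (M + 2) * ⟪w 0 - wstar, w 0 - wstar⟫ := by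
  have key : ((M : ℝ) + 1) ^ (M + 2) * ⟪w 0 - wstar, w 0 - wstar⟫ - phi w wstar M 0
      = ((M : ℝ) + 1) ^ M * (2 * ((M : ℝ) + 1) * (M : ℝ)) * ⟪w 1 - wstar, w 0 - w 1⟫ := by
    simp only [phi, show M + 2 = M + 1 + 1 from rfl, pow_succ, Nat.sub_zero, pow_zero]
    push_cast
    simp only [inner_add_left, inner_add_right, inner_sub_left, inner_sub_right,
      real_inner_smul_left, real_inner_smul_right, real_inner_comm]
    ring
  nlinarith [mul_nonneg (mul_nonneg
    (pow_nonneg (by positivity : (0:ℝ) ≤ (M:ℝ)+1) M)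
    (by positivity : (0:ℝ) ≤ 2 * ((M : ℝ) + 1) * (M : ℝ))) h, key]

/-- Optimal nonergodic sublinear rate of the proximal point algorithm:
if `w 0, …, w (N+1)` are PPA iterates of a monotone operator `A` with parameter `lam > 0`,
and `0 ∈ A w*`, then `‖w N - w (N+1)‖² ≤ (N^N / (N+1)^(N+1)) * ‖w 0 - w*‖²`. -/
theorem ppa_optimal_rate
    {E : Type*} [NormedAddCommGroup E] [InnerProductSpace ℝ E]
    (A : E → Set E)
    (hA : ∀ x y u v, u ∈ A x → v ∈ A y → 0 ≤ ⟪u - v, x - y⟫)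
    (lam : ℝ) (hlam : 0 < lam)
    (N : ℕ) (hN : 1 ≤ N)
    (wstar : E) (hstar : (0 : E) ∈ A wstar)
    (w : ℕ → E)
    (hw : ∀ k ≤ N, ∃ v ∈ A (w (k + 1)), w k - w (k + 1) = lam • v) :
    ‖w N - w (N + 1)‖ ^ 2 ≤ ((N : ℝ) ^ N / ((N : ℝ) + 1) ^ (N + 1)) * ‖w 0 - wstar‖ ^ 2 := by
  obtain ⟨M, rfl⟩ : ∃ M, N = M + 1 := ⟨N - 1, by omega⟩
  -- monotonicity with the zero of A
  have hB : ∀ k, k ≤ M + 1 → 0 ≤ ⟪w (k + 1) - wstar, w k - w (k + 1)⟫ := by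
    intro k hk
    obtain ⟨v, hv, he⟩ := hw k hk
    have h0 := hA (w (k + 1)) wstar v 0 hv hstar
    rw [sub_zero] at h0
    have : (0 : ℝ) ≤ ⟪w k - w (k + 1), w (k + 1) - wstar⟫ := by
      rw [he, real_inner_smul_left]
      exact mul_nonneg hlam.le h0
    rwa [real_inner_comm] at this
  -- monotonicity between consecutive iterates
  have hAk : ∀ k, k + 1 ≤ M + 1 →
      0 ≤ ⟪(w k - w (k + 1)) - (w (k + 1) - w (k + 2)), w (k + 1) - w (k + 2)⟫ := by
    intro k hk
    obtain ⟨v, hv, he⟩ := hw k (by omega)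
    obtain ⟨v', hv', he'⟩ := hw (k + 1) hk
    rw [show k + 1 + 1 = k + 2 from rfl] at he' hv'
    have h0 := hA (w (k + 1)) (w (k + 2)) v v' hv hv'
    have hsub : (w k - w (k + 1)) - (w (k + 1) - w (k + 2)) = lam • (v - v') := by
      rw [he, he', smul_sub]
    rw [hsub, real_inner_smul_left]
    exact mul_nonneg hlam.le h0
  -- potential chain
  have mono : ∀ j, j ≤ M → phi w wstar M j ≤ phi w wstar M 0 := by
    intro j
    induction j with
    | zero => intro _; exact le_rfl
    | succ i ih =>
      intro hi
      exact le_trans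
        (phi_step w wstar M i (by omega) (hAk i (by omega)) (hB (i + 1) (by omega)))
        (ih (by omega))
  have hlast := phi_last w wstar M (hAk M le_rfl) (hB (M + 1) le_rfl)
  have hzero := phi_zero w wstar M (hB 0 (by omega))
  have hchain := le_trans hlast (le_trans (mono M le_rfl) hzero)
  -- hchain : (M+1) * (M+2)^(M+2) * ⟪r,r⟫ ≤ (M+1)^(M+2) * ⟪x0,x0⟫
  set T : ℝ := ⟪w (M + 1) - w (M + 2), w (M + 1) - w (M + 2)⟫ with hT
  set S : ℝ := ⟪w 0 - wstar, w 0 - wstar⟫ with hS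
  have hMpos : (0 : ℝ) < (M : ℝ) + 1 := by positivity
  have hcancel : ((M : ℝ) + 2) ^ (M + 2) * T ≤ ((M : ℝ) + 1) ^ (M + 1) * S := by
    have hpow : ((M : ℝ) + 1) ^ (M + 2) = ((M : ℝ) + 1) * ((M : ℝ) + 1) ^ (M + 1) := by
      rw [show M + 2 = M + 1 + 1 from rfl, pow_succ]; ring
    rw [hpow] at hchain
    have := (mul_le_mul_iff_right₀ hMpos).mp (by linarith : ((M : ℝ) + 1) * (((M : ℝ) + 2) ^ (M + 2) * T)
      ≤ ((M : ℝ) + 1) * (((M : ℝ) + 1) ^ (M + 1) * S))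
    exact this
  -- convert the goal
  have hgoalT : ‖w (M + 1) - w (M + 1 + 1)‖ ^ 2 = T := by
    rw [hT, real_inner_self_eq_norm_sq]
  have hgoalS : ‖w 0 - wstar‖ ^ 2 = S := by
    rw [hS, real_inner_self_eq_norm_sq]
  rw [hgoalT, hgoalS]
  push_cast
  have hp2 : (0 : ℝ) < ((M : ℝ) + 1 + 1) ^ (M + 1 + 1) := by positivity
  rw [div_mul_eq_mul_div, le_div_iff₀ hp2]
  have e1 : ((M : ℝ) + 1 + 1) = ((M : ℝ) + 2) := by ring
  rw [e1]
  calc T * ((M : ℝ) + 2) ^ (M + 1 + 1) = ((M : ℝ) + 2) ^ (M + 2) * T := by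
        rw [show M + 1 + 1 = M + 2 from rfl]; ring
    _ ≤ ((M : ℝ) + 1) ^ (M + 1) * S := hcancel
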